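/- arXiv:2303.00839 — 4 statements merged into one kernel-verified Lean document; each statement's English description precedes it below -/
import Mathlib

section
/- For any subset Γ ⊆ Λ, equipped with the partial order inherited from Λ, the subgroup H_Γ of Wr_{λ∈Λ} H_λ is isomorphic as a group to the generalized wreath product Wr_{γ∈Γ} H_γ. -/
open scoped Classical

noncomputable section

namespace GW

/-- The support of an element of a dependent product of groups. -/
def supp {Λ : Type*} {H : Λ → Type*} [∀ l, One (H l)] (x : ∀ l, H l) : Set Λ :=
  {l | x l ≠ 1}

/-- The restricted direct product: functions with finite support. -/
abbrev S (Λ : Type*) (H : Λ → Type*) [∀ l, One (H l)] : Type _ :=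
  {x : ∀ l, H l // (supp x).Finite}

variable {Λ : Type*} [PartialOrder Λ] (H : Λ → Type*) [∀ l, Group (H l)]

/-- The underlying function of the permutation `ξ_h`. -/
def xiFun (l : Λ) (h : H l) (x : ∀ m, H m) : ∀ m, H m :=
  Function.update x l (if ∀ n, l < n → x n = 1 then h * x l else x l)

lemma xiFun_apply_ne (l : Λ) (h : H l) (x : ∀ m, H m) {m : Λ} (hm : m ≠ l) :
    xiFun H l h x m = x m := Function.update_of_ne hm _ x

lemma xiFun_support (l : Λ) (h : H l) (x : ∀ m, H m) :
    supp (xiFun H l h x) ⊆ insert l (supp x) := by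
  intro m hm
  rcases eq_or_ne m l with rfl | hne
  · exact Set.mem_insert _ _
  · refine Set.mem_insert_of_mem _ ?_
    have : xiFun H l h x m ≠ 1 := hm
    rwa [xiFun_apply_ne H l h x hne] at this

lemma xiFun_cond (l : Λ) (h : H l) (x : ∀ m, H m) :
    (∀ n, l < n → xiFun H l h x n = 1) ↔ ∀ n, l < n → x n = 1 := by
  constructor
  · intro hc n hn
    have := hc n hn
    rwa [xiFun_apply_ne H l h x hn.ne'] at this
  · intro hc n hn
    rw [xiFun_apply_ne H l h x hn.ne']
    exact hc n hn

lemma xiFun_inv (l : Λ) (h : H l) (x : ∀ m, H m) :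
    xiFun H l h⁻¹ (xiFun H l h x) = x := by
  funext m
  rcases eq_or_ne m l with rfl | hne
  · have hyl : xiFun H m h x m = if ∀ n, m < n → x n = 1 then h * x m else x m := by
      simp [xiFun]
    show Function.update (xiFun H m h x) m
      (if ∀ n, m < n → xiFun H m h x n = 1 then h⁻¹ * xiFun H m h x m
        else xiFun H m h x m) m = x m
    rw [Function.update_self]
    by_cases hc : ∀ n, m < n → x n = 1
    · rw [if_pos ((xiFun_cond H m h x).2 hc), hyl, if_pos hc, inv_mul_cancel_left]
    · rw [if_neg (fun hcy => hc ((xiFun_cond H m h x).1 hcy)), hyl, if_neg hc]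
  · rw [xiFun_apply_ne H l h⁻¹ _ hne, xiFun_apply_ne H l h x hne]

/-- The permutation `ξ_h` of the restricted product `S`. -/
def xi (l : Λ) (h : H l) : Equiv.Perm (S Λ H) where
  toFun x := ⟨xiFun H l h x.1, (x.2.insert l).subset (xiFun_support H l h x.1)⟩
  invFun x := ⟨xiFun H l h⁻¹ x.1, (x.2.insert l).subset (xiFun_support H l h⁻¹ x.1)⟩
  left_inv x := Subtype.ext (xiFun_inv H l h x.1)
  right_inv x := Subtype.ext (by simpa using xiFun_inv H l h⁻¹ x.1)

/-- The generalized wreath product `Wr_{λ∈Λ} H_λ` as a subgroup of `Perm S`. -/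
def Wr (Λ : Type*) [PartialOrder Λ] (H : Λ → Type*) [∀ l, Group (H l)] :
    Subgroup (Equiv.Perm (S Λ H)) :=
  Subgroup.closure {e | ∃ (l : Λ) (h : H l), e = xi H l h}

/-- For `Γ ⊆ Λ`, the subgroup `H_Γ` of `Perm S` generated by the `ξ_h` with `h ∈ H_γ`, `γ ∈ Γ`. -/
def HSub (Γ : Set Λ) : Subgroup (Equiv.Perm (S Λ H)) :=
  Subgroup.closure {e | ∃ (l : Λ) (h : H l), l ∈ Γ ∧ e = xi H l h}

/-- For `Γ ⊆ Λ`, the subgroup `D_Γ` of `H_Λ` of elements fixing all coordinates outside `Γ`. -/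
def D (Γ : Set Λ) : Subgroup ↥(Wr Λ H) where
  carrier := {g | ∀ (x : S Λ H) (l : Λ), l ∉ Γ → ((g : Equiv.Perm (S Λ H)) x).1 l = x.1 l}
  one_mem' := fun _ _ _ => rfl
  mul_mem' := by
    intro a b ha hb x l hl
    have h1 := ha ((b : Equiv.Perm (S Λ H)) x) l hl
    have h2 := hb x l hl
    simpa [h2] using h1
  inv_mem' := by
    intro a ha x l hl
    have := ha (((a : Equiv.Perm (S Λ H)))⁻¹ x) l hl
    simpa using this.symm

end GW

end

noncomputable section Aux

namespace GW

open Equiv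

variable {Λ : Type*} [PartialOrder Λ] (H : Λ → Type*) [∀ l, Group (H l)]

lemma perm_apply_inv_self {α : Type*} (f : Perm α) (x : α) : f (f⁻¹ x) = x :=
  f.apply_symm_apply x

lemma perm_inv_apply_self {α : Type*} (f : Perm α) (x : α) : f⁻¹ (f x) = x :=
  f.symm_apply_apply x

lemma xi_coe (l : Λ) (h : H l) (x : S Λ H) :
    ((xi H l h x : S Λ H) : ∀ m, H m) = xiFun H l h x.1 := rfl

lemma xiFun_apply_self (l : Λ) (h : H l) (x : ∀ m, H m) :
    xiFun H l h x l = if ∀ n, l < n → x n = 1 then h * x l else x l :=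
  Function.update_self _ _ _

/-- Elements of `H_Γ` only move coordinates `l ∈ Γ` of points `x` such that
all coordinates of `x` above `l` and outside `Γ` are trivial. -/
lemma hsub_moves (Γ : Set Λ) {g : Perm (S Λ H)} (hg : g ∈ HSub H Γ) :
    ∀ (x : S Λ H) (l : Λ), (g x).1 l ≠ x.1 l →
      l ∈ Γ ∧ ∀ η, l < η → η ∉ Γ → x.1 η = 1 := by
  induction hg using Subgroup.closure_induction with
  | mem e he =>
    obtain ⟨l₀, h, hl₀, rfl⟩ := he
    intro x l hx
    rcases eq_or_ne l l₀ with rfl | hne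
    · refine ⟨hl₀, fun η hη hηΓ => ?_⟩
      rw [xi_coe, xiFun_apply_self] at hx
      by_cases hc : ∀ n, l < n → x.1 n = 1
      · exact hc η hη
      · exact absurd rfl (by rwa [if_neg hc] at hx)
    · exact absurd (by rw [xi_coe, xiFun_apply_ne H l₀ h x.1 hne]) hx
  | one => intro x l hx; exact absurd rfl hx
  | mul a b _ _ ha hb =>
    intro x l hx
    rw [Perm.mul_apply] at hx
    rcases eq_or_ne ((a (b x)).1 l) ((b x).1 l) with h1 | h1
    · exact hb x l (by rwa [h1] at hx)
    · obtain ⟨hlΓ, hP⟩ := ha (b x) l h1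
      refine ⟨hlΓ, fun η hη hηΓ => ?_⟩
      have : (b x).1 η = x.1 η := by
        by_contra hbe
        exact hηΓ (hb x η hbe).1
      rw [← this]; exact hP η hη hηΓ
  | inv a _ ha =>
    intro x l hx
    have hx' : (a (a⁻¹ x)).1 l ≠ (a⁻¹ x).1 l := by
      rw [perm_apply_inv_self]; exact fun h => hx h.symm
    obtain ⟨hlΓ, hP⟩ := ha (a⁻¹ x) l hx'
    refine ⟨hlΓ, fun η hη hηΓ => ?_⟩
    have : (a (a⁻¹ x)).1 η = (a⁻¹ x).1 η := by
      by_contra hbe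
      exact hηΓ (ha (a⁻¹ x) η hbe).1
    rw [perm_apply_inv_self] at this
    rw [this]; exact hP η hη hηΓ

/-- Elements of a generalized wreath product respect agreement on an
upward-closed set of coordinates. -/
lemma wr_congr (U : Set Λ) (hU : ∀ u ∈ U, ∀ v, u < v → v ∈ U)
    {f : Perm (S Λ H)} (hf : f ∈ Wr Λ H) (y₁ y₂ : S Λ H) :
    (∀ u ∈ U, y₁.1 u = y₂.1 u) ↔ (∀ u ∈ U, (f y₁).1 u = (f y₂).1 u) := by
  induction hf using Subgroup.closure_induction generalizing y₁ y₂ with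
  | mem e he =>
    obtain ⟨l, h, rfl⟩ := he
    have fwd : ∀ z₁ z₂ : S Λ H, (∀ u ∈ U, z₁.1 u = z₂.1 u) →
        ∀ u ∈ U, (xi H l h z₁).1 u = (xi H l h z₂).1 u := by
      intro z₁ z₂ hz u hu
      rcases eq_or_ne u l with rfl | hne
      · rw [xi_coe, xi_coe, xiFun_apply_self, xiFun_apply_self]
        have hcond : (∀ n, u < n → z₁.1 n = 1) ↔ (∀ n, u < n → z₂.1 n = 1) := by
          constructor <;> intro hc n hn
          · rw [← hz n (hU u hu n hn)]; exact hc n hn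
          · rw [hz n (hU u hu n hn)]; exact hc n hn
        rw [hz u hu, if_congr hcond rfl rfl]
      · rw [xi_coe, xi_coe, xiFun_apply_ne H l h z₁.1 hne,
          xiFun_apply_ne H l h z₂.1 hne]
        exact hz u hu
    constructor
    · exact fwd y₁ y₂
    · intro hE
      have hne' : ∀ u ∈ U, u ≠ l → y₁.1 u = y₂.1 u := by
        intro u hu hne
        have := hE u hu
        rwa [xi_coe, xi_coe, xiFun_apply_ne H l h y₁.1 hne,
          xiFun_apply_ne H l h y₂.1 hne] at this
      intro u hu
      rcases eq_or_ne u l with rfl | hne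
      · have hcond : (∀ n, u < n → y₁.1 n = 1) ↔ (∀ n, u < n → y₂.1 n = 1) := by
          constructor <;> intro hc n hn
          · rw [← hne' n (hU u hu n hn) (ne_of_gt hn)]; exact hc n hn
          · rw [hne' n (hU u hu n hn) (ne_of_gt hn)]; exact hc n hn
        have := hE u hu
        rw [xi_coe, xi_coe, xiFun_apply_self, xiFun_apply_self] at this
        by_cases hc : ∀ n, u < n → y₁.1 n = 1
        · rw [if_pos hc, if_pos (hcond.1 hc)] at this
          exact mul_left_cancel this
        · rwa [if_neg hc, if_neg (fun h2 => hc (hcond.2 h2))] at this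
      · exact hne' u hu hne
  | one => simp
  | mul a b _ _ ha hb =>
    rw [hb y₁ y₂, ha (b y₁) (b y₂)]
    simp [Perm.mul_apply]
  | inv a _ ha =>
    have := ha (a⁻¹ y₁) (a⁻¹ y₂)
    simp only [perm_apply_inv_self] at this
    exact this.symm

variable (Γ : Set Λ)

/-- Extension by `1` of a point of the restricted product over `Γ` to one over `Λ`. -/
def iot (y : S ↥Γ (fun g : ↥Γ => H g.1)) : S Λ H :=
  ⟨fun l => if hl : l ∈ Γ then y.1 ⟨l, hl⟩ else 1, by
    refine (y.2.image Subtype.val).subset ?_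
    intro l hl
    simp only [supp, Set.mem_setOf_eq] at hl
    by_cases hΓ : l ∈ Γ
    · rw [dif_pos hΓ] at hl
      exact ⟨⟨l, hΓ⟩, hl, rfl⟩
    · rw [dif_neg hΓ] at hl
      exact absurd rfl hl⟩

lemma iot_apply_mem (y : S ↥Γ (fun g : ↥Γ => H g.1)) {l : Λ} (hl : l ∈ Γ) :
    (iot H Γ y).1 l = y.1 ⟨l, hl⟩ := dif_pos hl

lemma iot_apply_not_mem (y : S ↥Γ (fun g : ↥Γ => H g.1)) {l : Λ} (hl : l ∉ Γ) :
    (iot H Γ y).1 l = 1 := dif_neg hl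

lemma iot_injective : Function.Injective (iot H Γ) := by
  intro y₁ y₂ h
  refine Subtype.ext (funext fun γ => ?_)
  have := congrArg (fun z : S Λ H => z.1 γ.1) h
  simpa [iot_apply_mem H Γ _ γ.2] using this

/-- The basic intertwining relation between `ξ`'s over `Λ` and over `Γ`. -/
lemma xi_iot (l : Λ) (hl : l ∈ Γ) (h : H l) (y : S ↥Γ (fun g : ↥Γ => H g.1)) :
    xi H l h (iot H Γ y) = iot H Γ (xi (fun g : ↥Γ => H g.1) ⟨l, hl⟩ h y) := by
  refine Subtype.ext (funext fun m => ?_)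
  show xiFun H l h (iot H Γ y).1 m = (iot H Γ (xi (fun g : ↥Γ => H g.1) ⟨l, hl⟩ h y)).1 m
  rcases eq_or_ne m l with rfl | hne
  · have hcond : (∀ n, m < n → (iot H Γ y).1 n = 1) ↔
        (∀ n : ↥Γ, (⟨m, hl⟩ : ↥Γ) < n → y.1 n = 1) := by
      constructor
      · intro hc n hn
        have h1 := hc n.1 (Subtype.coe_lt_coe.mpr hn)
        rw [iot_apply_mem H Γ y n.2] at h1
        exact h1
      · intro hc n hn
        by_cases hnΓ : n ∈ Γ
        · rw [iot_apply_mem H Γ y hnΓ]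
          exact hc ⟨n, hnΓ⟩ (Subtype.mk_lt_mk.mpr hn)
        · exact iot_apply_not_mem H Γ y hnΓ
    rw [xiFun_apply_self, iot_apply_mem H Γ (xi (fun g : ↥Γ => H g.1) ⟨m, hl⟩ h y) hl,
      xi_coe, xiFun_apply_self, iot_apply_mem H Γ y hl]
    exact if_congr hcond rfl rfl
  · rw [xiFun_apply_ne H l h _ hne]
    by_cases hmΓ : m ∈ Γ
    · rw [iot_apply_mem H Γ _ hmΓ, iot_apply_mem H Γ _ hmΓ, xi_coe,
        xiFun_apply_ne (fun g : ↥Γ => H g.1) ⟨l, hl⟩ h y.1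
          (fun hc => hne (congrArg Subtype.val hc))]
    · rw [iot_apply_not_mem H Γ _ hmΓ, iot_apply_not_mem H Γ _ hmΓ]

lemma intertwine_unique {g : Perm (S Λ H)} {f₁ f₂ : Perm (S ↥Γ (fun g : ↥Γ => H g.1))}
    (h₁ : ∀ y, g (iot H Γ y) = iot H Γ (f₁ y)) (h₂ : ∀ y, g (iot H Γ y) = iot H Γ (f₂ y)) :
    f₁ = f₂ :=
  Equiv.ext fun y => iot_injective H Γ ((h₁ y).symm.trans (h₂ y))

/-- Every element of `H_Γ` intertwines with an element of `Wr Γ`. -/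
lemma exists_intertwine {g : Perm (S Λ H)} (hg : g ∈ HSub H Γ) :
    ∃ f ∈ Wr ↥Γ (fun g : ↥Γ => H g.1), ∀ y, g (iot H Γ y) = iot H Γ (f y) := by
  induction hg using Subgroup.closure_induction with
  | mem e he =>
    obtain ⟨l, h, hl, rfl⟩ := he
    exact ⟨xi (fun g : ↥Γ => H g.1) ⟨l, hl⟩ h,
      Subgroup.subset_closure ⟨⟨l, hl⟩, h, rfl⟩, xi_iot H Γ l hl h⟩
  | one => exact ⟨1, one_mem _, fun y => rfl⟩
  | mul a b _ _ ha hb =>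
    obtain ⟨fa, hfa, ha'⟩ := ha
    obtain ⟨fb, hfb, hb'⟩ := hb
    exact ⟨fa * fb, mul_mem hfa hfb, fun y => by
      rw [Perm.mul_apply, hb' y, ha' (fb y), Perm.mul_apply]⟩
  | inv a _ ha =>
    obtain ⟨fa, hfa, ha'⟩ := ha
    refine ⟨fa⁻¹, inv_mem hfa, fun y => ?_⟩
    have := ha' (fa⁻¹ y)
    rw [perm_apply_inv_self] at this
    rw [← this, perm_inv_apply_self]

/-- Every element of `Wr Γ` lifts to an element of `H_Γ`. -/
lemma exists_lift {f : Perm (S ↥Γ (fun g : ↥Γ => H g.1))}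
    (hf : f ∈ Wr ↥Γ (fun g : ↥Γ => H g.1)) :
    ∃ g ∈ HSub H Γ, ∀ y, g (iot H Γ y) = iot H Γ (f y) := by
  induction hf using Subgroup.closure_induction with
  | mem e he =>
    obtain ⟨γ, h, rfl⟩ := he
    refine ⟨xi H γ.1 h, Subgroup.subset_closure ⟨γ.1, h, γ.2, rfl⟩, fun y => ?_⟩
    exact xi_iot H Γ γ.1 γ.2 h y
  | one => exact ⟨1, one_mem _, fun y => rfl⟩
  | mul a b _ _ ha hb =>
    obtain ⟨ga, hga, ha'⟩ := ha
    obtain ⟨gb, hgb, hb'⟩ := hb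
    exact ⟨ga * gb, mul_mem hga hgb, fun y => by
      rw [Perm.mul_apply, Perm.mul_apply, hb' y, ha' (b y)]⟩
  | inv a _ ha =>
    obtain ⟨ga, hga, ha'⟩ := ha
    refine ⟨ga⁻¹, inv_mem hga, fun y => ?_⟩
    have := ha' (a⁻¹ y)
    rw [perm_apply_inv_self] at this
    rw [← this, perm_inv_apply_self]

/-- The key technical lemma: each element of `H_Γ` acts, on the coordinates in an
appropriate upward-closed set `U` of a fixed fiber, exactly as its intertwining partner. -/
lemma key (x₀ : S Λ H) {g : Perm (S Λ H)} (hg : g ∈ HSub H Γ) :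
    ∃ f ∈ Wr ↥Γ (fun g : ↥Γ => H g.1),
      (∀ y, g (iot H Γ y) = iot H Γ (f y)) ∧
      (∀ x : S Λ H, (∀ η ∉ Γ, x.1 η = x₀.1 η) →
        ∀ y : S ↥Γ (fun g : ↥Γ => H g.1),
          (∀ u : ↥Γ, (∀ η, u.1 < η → η ∉ Γ → x₀.1 η = 1) → y.1 u = x.1 u.1) →
          ∀ u : ↥Γ, (∀ η, u.1 < η → η ∉ Γ → x₀.1 η = 1) →
            (g x).1 u.1 = (f y).1 u) := by
  classical
  set U : Set ↥Γ := {γ : ↥Γ | ∀ η, γ.1 < η → η ∉ Γ → x₀.1 η = 1} with hUdef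
  have hU : ∀ u ∈ U, ∀ v, u < v → v ∈ U := by
    intro u hu v huv η hη hηΓ
    exact hu η (lt_trans (Subtype.coe_lt_coe.mpr huv) hη) hηΓ
  induction hg using Subgroup.closure_induction with
  | mem e he =>
    obtain ⟨l, h, hl, rfl⟩ := he
    refine ⟨xi (fun g : ↥Γ => H g.1) ⟨l, hl⟩ h,
      Subgroup.subset_closure ⟨⟨l, hl⟩, h, rfl⟩, xi_iot H Γ l hl h, ?_⟩
    intro x hxF y hxy u hu
    rcases eq_or_ne u.1 l with heq | hne
    · have hu2 : u = ⟨l, hl⟩ := Subtype.ext heq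
      subst hu2
      show xiFun H l h x.1 l = xiFun (fun g : ↥Γ => H g.1) ⟨l, hl⟩ h y.1 ⟨l, hl⟩
      have hcond : (∀ n, l < n → x.1 n = 1) ↔
          (∀ n : ↥Γ, (⟨l, hl⟩ : ↥Γ) < n → y.1 n = 1) := by
        constructor
        · intro hc n hn
          have hnU : n ∈ U := hU ⟨l, hl⟩ hu n hn
          rw [hxy n hnU]
          exact hc n.1 (Subtype.coe_lt_coe.mpr hn)
        · intro hc n hn
          by_cases hnΓ : n ∈ Γ
          · have hnU : (⟨n, hnΓ⟩ : ↥Γ) ∈ U := hU ⟨l, hl⟩ hu _ (Subtype.mk_lt_mk.mpr hn)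
            rw [← hxy ⟨n, hnΓ⟩ hnU]
            exact hc ⟨n, hnΓ⟩ (Subtype.mk_lt_mk.mpr hn)
          · rw [hxF n hnΓ]
            exact hu n hn hnΓ
      rw [xiFun_apply_self, xiFun_apply_self,
        show y.1 ⟨l, hl⟩ = x.1 l from hxy ⟨l, hl⟩ hu]
      exact if_congr hcond rfl rfl
    · rw [xi_coe, xi_coe, xiFun_apply_ne H l h x.1 hne,
        xiFun_apply_ne (fun g : ↥Γ => H g.1) ⟨l, hl⟩ h y.1
          (fun hc => hne (congrArg Subtype.val hc))]
      exact (hxy u hu).symm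
  | one => exact ⟨1, one_mem _, fun y => rfl, fun x _ y hxy u hu => (hxy u hu).symm⟩
  | mul a b hamem hbmem ha hb =>
    obtain ⟨fa, hfa, ha1, ha2⟩ := ha
    obtain ⟨fb, hfb, hb1, hb2⟩ := hb
    have hab1 : ∀ y, (a * b) (iot H Γ y) = iot H Γ ((fa * fb) y) := by
      intro y
      rw [Perm.mul_apply, hb1 y, ha1 (fb y), Perm.mul_apply]
    refine ⟨fa * fb, mul_mem hfa hfb, hab1, ?_⟩
    intro x hxF y hxy u hu
    have hbxF : ∀ η ∉ Γ, (b x).1 η = x₀.1 η := by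
      intro η hηΓ
      have : (b x).1 η = x.1 η := by
        by_contra hbe
        exact hηΓ (hsub_moves H Γ hbmem x η hbe).1
      rw [this]; exact hxF η hηΓ
    have hfby : ∀ u : ↥Γ, u ∈ U → (fb y).1 u = (b x).1 u.1 := by
      intro u hu
      exact (hb2 x hxF y hxy u hu).symm
    rw [Perm.mul_apply, Perm.mul_apply]
    exact ha2 (b x) hbxF (fb y) hfby u hu
  | inv a hamem ha =>
    obtain ⟨fa, hfa, ha1, ha2⟩ := ha
    have ha1' : ∀ y, a⁻¹ (iot H Γ y) = iot H Γ (fa⁻¹ y) := by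
      intro y
      have := ha1 (fa⁻¹ y)
      rw [perm_apply_inv_self] at this
      rw [← this, perm_inv_apply_self]
    refine ⟨fa⁻¹, inv_mem hfa, ha1', ?_⟩
    intro x hxF y hxy u hu
    set x' : S Λ H := a⁻¹ x with hx'
    have hx'F : ∀ η ∉ Γ, x'.1 η = x₀.1 η := by
      intro η hηΓ
      have : (a x').1 η = x'.1 η := by
        by_contra hbe
        exact hηΓ (hsub_moves H Γ hamem x' η hbe).1
      rw [hx'] at this ⊢
      rw [perm_apply_inv_self] at this
      rw [← this]; exact hxF η hηΓ
    -- restriction of x' to Γ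
    set y'' : S ↥Γ (fun g : ↥Γ => H g.1) :=
      ⟨fun γ => x'.1 γ.1, x'.2.preimage (Subtype.val_injective.injOn)⟩ with hy''
    have hy''x' : ∀ u : ↥Γ, u ∈ U → y''.1 u = x'.1 u.1 := fun u _ => rfl
    have step : ∀ u : ↥Γ, u ∈ U → x.1 u.1 = (fa y'').1 u := by
      intro u hu
      have := ha2 x' hx'F y'' hy''x' u hu
      rwa [hx', perm_apply_inv_self] at this
    -- fa y'' agrees with y on U, so fa⁻¹ y agrees with y'' on U
    have hyU : ∀ u ∈ U, (fa y'').1 u = y.1 u := by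
      intro u hu
      rw [← step u hu, hxy u hu]
    have := (wr_congr (fun g : ↥Γ => H g.1) U hU hfa (fa⁻¹ y) y'').mpr
      (by
        intro u hu
        rw [perm_apply_inv_self]
        exact (hyU u hu).symm)
    exact (this u hu).symm

end GW

end Aux

/-- for any `Γ ⊆ Λ` with the inherited partial order, the subgroup `H_Γ`
of `Wr_{λ∈Λ} H_λ` is isomorphic to the generalized wreath product `Wr_{γ∈Γ} H_γ`. -/
theorem hsub_iso_wr {Λ : Type*} [PartialOrder Λ] (H : Λ → Type*) [∀ l, Group (H l)]
    (Γ : Set Λ) :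
    Nonempty (↥(GW.HSub H Γ) ≃* ↥(GW.Wr ↥Γ (fun g : ↥Γ => H g.1))) := by
  classical
  have ex : ∀ g : ↥(GW.HSub H Γ), ∃ f ∈ GW.Wr ↥Γ (fun g : ↥Γ => H g.1),
      ∀ y, g.1 (GW.iot H Γ y) = GW.iot H Γ (f y) :=
    fun g => GW.exists_intertwine H Γ g.2
  choose F hF1 hF2 using ex
  have hmul : ∀ a b : ↥(GW.HSub H Γ), F (a * b) = F a * F b := by
    intro a b
    refine GW.intertwine_unique H Γ (hF2 (a * b)) fun y => ?_
    show (a.1 * b.1) (GW.iot H Γ y) = _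
    rw [Equiv.Perm.mul_apply, hF2 b y, hF2 a (F b y), Equiv.Perm.mul_apply]
  let phi : ↥(GW.HSub H Γ) →* ↥(GW.Wr ↥Γ (fun g : ↥Γ => H g.1)) :=
    { toFun := fun g => ⟨F g, hF1 g⟩
      map_one' := Subtype.ext (GW.intertwine_unique H Γ (hF2 1) fun y => rfl)
      map_mul' := fun a b => Subtype.ext (hmul a b) }
  have hinj : Function.Injective phi := by
    refine (injective_iff_map_eq_one phi).mpr ?_
    intro g hgone
    have hFg : F g = 1 := congrArg Subtype.val hgone
    refine Subtype.ext (Equiv.ext fun x₀ => Subtype.ext (funext fun l => ?_))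
    by_contra hne
    obtain ⟨hlΓ, hP⟩ := GW.hsub_moves H Γ g.2 x₀ l hne
    obtain ⟨f, hf, h1, h2⟩ := GW.key H Γ x₀ g.2
    have hf1 : f = 1 := by
      refine GW.intertwine_unique H Γ h1 fun y => ?_
      rw [hF2 g y, hFg]
    have := h2 x₀ (fun η _ => rfl)
      ⟨fun γ => x₀.1 γ.1, x₀.2.preimage Subtype.val_injective.injOn⟩
      (fun u _ => rfl) ⟨l, hlΓ⟩ hP
    rw [hf1] at this
    exact hne this
  have hsurj : Function.Surjective phi := by
    intro f₀
    obtain ⟨g, hg, hgy⟩ := GW.exists_lift H Γ f₀.2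
    refine ⟨⟨g, hg⟩, Subtype.ext ?_⟩
    exact GW.intertwine_unique H Γ (hF2 ⟨g, hg⟩) hgy
  exact ⟨MulEquiv.ofBijective phi ⟨hinj, hsurj⟩⟩
end

section
/- Suppose Γ ⊆ Λ is downward closed (if γ ∈ Γ and λ ≤ γ then λ ∈ Γ). Then every element g of H_Λ = Wr_{λ∈Λ} H_λ preserves the equivalence relation ∼_Γ on S: for all x, y ∈ S, if x ∼_Γ y then g(x) ∼_Γ g(y). Consequently H_Λ acts on the quotient set S/∼_Γ. -/
open scoped Classical

/-- The equivalence relation `∼_Γ` on `S`: `x ∼_Γ y` iff `x` and `y` agree at every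
coordinate outside `Γ`. -/
def simSetoid {Λ : Type*} [PartialOrder Λ] (H : Λ → Type*) [∀ l, Group (H l)]
    (Γ : Set Λ) : Setoid (GW.S Λ H) where
  r x y := ∀ l ∉ Γ, x.1 l = y.1 l
  iseqv := ⟨fun _ _ _ => rfl, fun h l hl => (h l hl).symm,
    fun h1 h2 l hl => (h1 l hl).trans (h2 l hl)⟩

/-- if `Γ ⊆ Λ` is downward closed, then every element of
`H_Λ = Wr_{λ∈Λ} H_λ` preserves `∼_Γ`; consequently `H_Λ` acts on the quotient `S/∼_Γ`. -/
theorem wr_preserves_sim {Λ : Type*} [PartialOrder Λ] (H : Λ → Type*) [∀ l, Group (H l)]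
    (Γ : Set Λ) (hdc : ∀ ⦃g l : Λ⦄, g ∈ Γ → l ≤ g → l ∈ Γ) :
    (∀ g ∈ GW.Wr Λ H, ∀ x y : GW.S Λ H,
      (∀ l ∉ Γ, x.1 l = y.1 l) → ∀ l ∉ Γ, (g x).1 l = (g y).1 l) ∧
    ∃ f : ↥(GW.Wr Λ H) →* Equiv.Perm (Quotient (simSetoid H Γ)),
      ∀ (g : ↥(GW.Wr Λ H)) (x : GW.S Λ H),
        f g (Quotient.mk (simSetoid H Γ) x) =
          Quotient.mk (simSetoid H Γ) ((g : Equiv.Perm (GW.S Λ H)) x) := by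

  classical
  -- generators preserve the relation
  have gen : ∀ (l : Λ) (h : H l) (x y : GW.S Λ H),
      (∀ m ∉ Γ, x.1 m = y.1 m) → ∀ m ∉ Γ, ((GW.xi H l h) x).1 m = ((GW.xi H l h) y).1 m := by
    intro l h x y hxy m hm
    rcases eq_or_ne m l with rfl | hne
    · have hcond : (∀ n, m < n → x.1 n = 1) ↔ (∀ n, m < n → y.1 n = 1) := by
        have key : ∀ n, m < n → x.1 n = y.1 n := fun n hn =>
          hxy n (fun hnΓ => hm (hdc hnΓ hn.le))
        constructor
        · intro hc n hn; rw [← key n hn]; exact hc n hn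
        · intro hc n hn; rw [key n hn]; exact hc n hn
      show GW.xiFun H m h x.1 m = GW.xiFun H m h y.1 m
      simp only [GW.xiFun, Function.update_self]
      by_cases hc : ∀ n, m < n → x.1 n = 1
      · rw [if_pos hc, if_pos (hcond.1 hc), hxy m hm]
      · rw [if_neg hc, if_neg (fun hy => hc (hcond.2 hy)), hxy m hm]
    · show GW.xiFun H l h x.1 m = GW.xiFun H l h y.1 m
      rw [GW.xiFun_apply_ne H l h x.1 hne, GW.xiFun_apply_ne H l h y.1 hne]
      exact hxy m hm
  have xi_inv : ∀ (l : Λ) (h : H l), (GW.xi H l h)⁻¹ = GW.xi H l h⁻¹ := by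
    intro l h
    ext x
    rfl
  set P : Equiv.Perm (GW.S Λ H) → Prop := fun e =>
    ∀ x y : GW.S Λ H, (∀ m ∉ Γ, x.1 m = y.1 m) → ∀ m ∉ Γ, (e x).1 m = (e y).1 m with hP
  let K : Subgroup (Equiv.Perm (GW.S Λ H)) :=
  { carrier := {e | P e ∧ P e⁻¹}
    one_mem' := ⟨fun x y h => h, fun x y h => h⟩
    mul_mem' := by
      rintro a b ⟨ha1, ha2⟩ ⟨hb1, hb2⟩
      refine ⟨fun x y h => ha1 _ _ (hb1 x y h), fun x y h => ?_⟩
      simp only [mul_inv_rev]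
      exact hb2 _ _ (ha2 x y h)
    inv_mem' := by
      rintro a ⟨ha1, ha2⟩
      exact ⟨ha2, by simpa using ha1⟩ }
  have hK : GW.Wr Λ H ≤ K := by
    rw [GW.Wr, Subgroup.closure_le]
    rintro e ⟨l, h, rfl⟩
    exact ⟨gen l h, by rw [xi_inv]; exact gen l h⁻¹⟩
  refine ⟨fun g hg x y hxy => (hK hg).1 x y hxy, ?_⟩
  have pres : ∀ g : ↥(GW.Wr Λ H), ∀ x y : GW.S Λ H,
      (simSetoid H Γ).r x y → (simSetoid H Γ).r (g.1 x) (g.1 y) :=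
    fun g => (hK g.2).1
  let F : ↥(GW.Wr Λ H) → Equiv.Perm (Quotient (simSetoid H Γ)) := fun g =>
  { toFun := Quotient.map g.1 (pres g)
    invFun := Quotient.map (g⁻¹).1 (pres g⁻¹)
    left_inv := by
      intro q
      induction q using Quotient.ind with
      | _ x => simp [Quotient.map_mk]
    right_inv := by
      intro q
      induction q using Quotient.ind with
      | _ x => simp [Quotient.map_mk] }
  refine ⟨{ toFun := F, map_one' := ?_, map_mul' := ?_ }, fun g x => rfl⟩
  · ext q
    induction q using Quotient.ind with
    | _ x => rfl
  · intro a b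
    ext q
    induction q using Quotient.ind with
    | _ x => rfl
end

section
/- Suppose Γ ⊆ Λ is downward closed (if γ ∈ Γ and λ ≤ γ then λ ∈ Γ). Then D_Γ is a normal subgroup of H_Λ = Wr_{λ∈Λ} H_λ, and D_Γ equals the normal closure of the subgroup H_Γ in H_Λ. -/
open scoped Classical

noncomputable section

namespace GW

variable {Λ : Type*} [PartialOrder Λ] (H : Λ → Type*) [∀ l, Group (H l)]

variable (Γ : Set Λ)

/-- Permutations of `S` fixing every coordinate in `T`. -/
def Fix (T : Set Λ) : Subgroup (Equiv.Perm (S Λ H)) where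
  carrier := {e | ∀ (x : S Λ H) l, l ∈ T → (e x).1 l = x.1 l}
  one_mem' := fun _ _ _ => rfl
  mul_mem' := by
    intro a b ha hb x l hl
    have h1 := ha (b x) l hl
    have h2 := hb x l hl
    simpa [h2] using h1
  inv_mem' := by
    intro a ha x l hl
    have := ha (a⁻¹ x) l hl
    simpa using this.symm

lemma HSub_le_Fix {Γ' T : Set Λ} (h : ∀ l ∈ Γ', l ∉ T) : HSub H Γ' ≤ Fix H T := by
  rw [HSub]
  refine (Subgroup.closure_le _).2 ?_
  rintro e ⟨l, g, hl, rfl⟩ x m hm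
  exact xiFun_apply_ne H l g x.1 (by rintro rfl; exact h _ hl hm)

/-- The equivalence "equal outside `Γ`". -/
def Rel (x y : S Λ H) : Prop := ∀ l, l ∉ Γ → x.1 l = y.1 l

variable {Γ} in
lemma rel_xi (hdc : ∀ ⦃g l : Λ⦄, g ∈ Γ → l ≤ g → l ∈ Γ) (l : Λ) (h : H l)
    {x y : S Λ H} (hxy : Rel H Γ x y) : Rel H Γ ((xi H l h) x) ((xi H l h) y) := by
  intro m hm
  rcases eq_or_ne m l with rfl | hne
  · show xiFun H m h x.1 m = xiFun H m h y.1 m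
    unfold xiFun
    rw [Function.update_self, Function.update_self]
    have hcond : (∀ n, m < n → x.1 n = 1) ↔ (∀ n, m < n → y.1 n = 1) := by
      constructor <;> intro hc n hn
      · rw [← hxy n (fun hnΓ => hm (hdc hnΓ hn.le))]; exact hc n hn
      · rw [hxy n (fun hnΓ => hm (hdc hnΓ hn.le))]; exact hc n hn
    have hxl : x.1 m = y.1 m := hxy m hm
    by_cases hc : ∀ n, m < n → x.1 n = 1
    · rw [if_pos hc, if_pos (hcond.1 hc), hxl]
    · rw [if_neg hc, if_neg (fun h' => hc (hcond.2 h')), hxl]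
  · rw [show ((xi H l h) x).1 m = x.1 m from xiFun_apply_ne H l h x.1 hne,
        show ((xi H l h) y).1 m = y.1 m from xiFun_apply_ne H l h y.1 hne]
    exact hxy m hm

/-- Permutations preserving the relation `Rel`. -/
def Pres : Subgroup (Equiv.Perm (S Λ H)) where
  carrier := {e | ∀ x y, Rel H Γ x y ↔ Rel H Γ (e x) (e y)}
  one_mem' := fun _ _ => Iff.rfl
  mul_mem' := fun ha hb x y => (hb x y).trans (ha _ _)
  inv_mem' := by
    intro a ha x y
    have := (ha (a⁻¹ x) (a⁻¹ y)).symm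
    simpa using this

lemma xi_inv_apply (l : Λ) (h : H l) (x : S Λ H) :
    (xi H l h⁻¹) ((xi H l h) x) = x :=
  Subtype.ext (xiFun_inv H l h x.1)

variable {Γ} in
lemma Wr_le_Pres (hdc : ∀ ⦃g l : Λ⦄, g ∈ Γ → l ≤ g → l ∈ Γ) : Wr Λ H ≤ Pres H Γ := by
  rw [Wr]
  refine (Subgroup.closure_le _).2 ?_
  rintro e ⟨l, h, rfl⟩ x y
  constructor
  · exact rel_xi H hdc l h
  · intro hr
    have := rel_xi H hdc l h⁻¹ hr
    rwa [xi_inv_apply, xi_inv_apply] at this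

variable {Γ} in
lemma mem_D_iff (g : ↥(Wr Λ H)) : g ∈ D H Γ ↔ (g : Equiv.Perm (S Λ H)) ∈ Fix H Γᶜ := by
  constructor
  · intro hg x l hl; exact hg x l hl
  · intro hg x l hl; exact hg x l hl

end GW

end

/-- if `Γ ⊆ Λ` is downward closed, then `D_Γ` is a normal subgroup of
`H_Λ = Wr_{λ∈Λ} H_λ`, and `D_Γ` equals the normal closure of `H_Γ` in `H_Λ`. -/
theorem d_normal_eq_normalClosure {Λ : Type*} [PartialOrder Λ] (H : Λ → Type*)
    [∀ l, Group (H l)] (Γ : Set Λ) (hdc : ∀ ⦃g l : Λ⦄, g ∈ Γ → l ≤ g → l ∈ Γ) :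
    (GW.D H Γ).Normal ∧
    GW.D H Γ = Subgroup.normalClosure
      (((GW.HSub H Γ).subgroupOf (GW.Wr Λ H) : Subgroup ↥(GW.Wr Λ H)) :
        Set ↥(GW.Wr Λ H)) := by
  open GW Subgroup in
  -- notation
  have hnorm : (GW.D H Γ).Normal := by
    constructor
    intro n hn g x l hl
    have hg : (g : Equiv.Perm (GW.S Λ H)) ∈ GW.Pres H Γ := GW.Wr_le_Pres H hdc g.2
    have hrel : GW.Rel H Γ ((n : Equiv.Perm (GW.S Λ H)) ((g : Equiv.Perm (GW.S Λ H))⁻¹ x))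
        ((g : Equiv.Perm (GW.S Λ H))⁻¹ x) := fun m hm => hn _ m hm
    have := (hg _ _).1 hrel l hl
    simpa [mul_assoc] using this
  refine ⟨hnorm, ?_⟩
  set G := ↥(GW.Wr Λ H)
  set N := Subgroup.normalClosure
      (((GW.HSub H Γ).subgroupOf (GW.Wr Λ H) : Subgroup G) : Set G) with hN
  set K := (GW.HSub H Γᶜ).subgroupOf (GW.Wr Λ H) with hK
  have hNleD : N ≤ GW.D H Γ := by
    haveI := hnorm
    apply Subgroup.normalClosure_le_normal
    intro g hg
    have : (g : Equiv.Perm (GW.S Λ H)) ∈ GW.HSub H Γ := hg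
    exact (GW.mem_D_iff H g).2 (GW.HSub_le_Fix H (fun l hl => Set.notMem_compl_iff.2 hl) this)
  have hKfix : ∀ k : G, k ∈ K → (k : Equiv.Perm (GW.S Λ H)) ∈ GW.Fix H Γ :=
    fun k hk => GW.HSub_le_Fix H (fun l hl => hl) hk
  -- every element of G is in N ⊔ K
  have hsup : ∀ g : G, g ∈ N ⊔ K := by
    intro g
    have hmap : GW.Wr Λ H ≤ (N ⊔ K).map (GW.Wr Λ H).subtype := by
      show Subgroup.closure _ ≤ _
      refine (Subgroup.closure_le _).2 ?_
      rintro e ⟨l, h, rfl⟩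
      have he : GW.xi H l h ∈ GW.Wr Λ H :=
        Subgroup.subset_closure ⟨l, h, rfl⟩
      by_cases hl : l ∈ Γ
      · refine ⟨⟨GW.xi H l h, he⟩, ?_, rfl⟩
        exact Subgroup.mem_sup_left
          (Subgroup.subset_normalClosure
            (show _ ∈ (GW.HSub H Γ).subgroupOf (GW.Wr Λ H) from
              Subgroup.subset_closure ⟨l, h, hl, rfl⟩))
      · exact ⟨⟨GW.xi H l h, he⟩,
          Subgroup.mem_sup_right (Subgroup.subset_closure ⟨l, h, hl, rfl⟩), rfl⟩
    obtain ⟨y, hy, hy2⟩ := hmap g.2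
    have : y = g := Subtype.ext hy2
    rwa [this] at hy
  -- prove the two inclusions
  refine le_antisymm ?_ hNleD
  intro g hg
  have := hsup g
  rw [← SetLike.mem_coe, Subgroup.normal_mul] at this
  obtain ⟨n, hn, k, hk, rfl⟩ := this
  have hkD : k ∈ GW.D H Γ := by
    have : k = n⁻¹ * (n * k) := (inv_mul_cancel_left n k).symm
    rw [this]
    exact mul_mem (inv_mem (hNleD hn)) hg
  have hk1 : k = 1 := by
    have hfix := hKfix k hk
    apply Subtype.ext
    apply Equiv.ext
    intro x
    apply Subtype.ext
    funext m
    by_cases hm : m ∈ Γ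
    · exact hfix x m hm
    · exact hkD x m hm
  rw [hk1]
  simpa using hn
end

section
/- Suppose Γ ⊆ Λ is downward closed (if γ ∈ Γ and λ ≤ γ then λ ∈ Γ). Then the quotient group H_Λ / D_Γ is isomorphic to the generalized wreath product Wr_{λ∈Λ\Γ} H_λ, where Λ \ Γ carries the partial order inherited from Λ. -/
open scoped Classical

noncomputable section Aux

namespace GW

variable {Λ : Type*} [PartialOrder Λ] (H : Λ → Type*) [∀ l, Group (H l)] (Γ : Set Λ)

/-- Restriction of an element of `S Λ H` to coordinates outside `Γ`. -/
def res (x : S Λ H) : S ↥(Γᶜ) (fun l : ↥(Γᶜ) => H l.1) :=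
  ⟨fun l => x.1 l.1,
    Set.Finite.preimage (Subtype.val_injective.injOn) x.2⟩

/-- Extension by `1` of an element of the restricted product over `Γᶜ`. -/
def extend (y : S ↥(Γᶜ) (fun l : ↥(Γᶜ) => H l.1)) : S Λ H :=
  ⟨fun l => if h : l ∈ Γᶜ then y.1 ⟨l, h⟩ else 1, by
    refine (y.2.image Subtype.val).subset ?_
    intro l hl
    have hl' : ¬ (if h : l ∈ Γᶜ then y.1 ⟨l, h⟩ else (1 : H l)) = 1 := hl
    by_cases h : l ∈ Γᶜ
    · rw [dif_pos h] at hl'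
      exact ⟨⟨l, h⟩, hl', rfl⟩
    · rw [dif_neg h] at hl'
      exact absurd rfl hl'⟩

lemma res_extend (y : S ↥(Γᶜ) (fun l : ↥(Γᶜ) => H l.1)) :
    res H Γ (extend H Γ y) = y :=
  Subtype.ext (funext fun l => dif_pos l.2)

lemma res_surjective : Function.Surjective (res H Γ) :=
  fun y => ⟨extend H Γ y, res_extend H Γ y⟩

lemma xi_coord (l : Λ) (h : H l) (x : S Λ H) :
    ((xi H l h x : S Λ H)).1 = xiFun H l h x.1 := rfl

lemma res_xi_mem {l : Λ} (hl : l ∈ Γ) (h : H l) (x : S Λ H) :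
    res H Γ (xi H l h x) = res H Γ x :=
  Subtype.ext (funext fun m =>
    xiFun_apply_ne H l h x.1 (fun he : m.1 = l => m.2 (he ▸ hl)))

lemma res_xi_notmem (hdc : ∀ ⦃g l : Λ⦄, g ∈ Γ → l ≤ g → l ∈ Γ)
    {l : Λ} (hl : l ∈ Γᶜ) (h : H l) (x : S Λ H) :
    res H Γ (xi H l h x) = xi (fun m : ↥(Γᶜ) => H m.1) ⟨l, hl⟩ h (res H Γ x) := by
  apply Subtype.ext; funext m
  show xiFun H l h x.1 m.1 = xiFun (fun m : ↥(Γᶜ) => H m.1) ⟨l, hl⟩ h (res H Γ x).1 m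
  rcases eq_or_ne m ⟨l, hl⟩ with rfl | hne
  · have hcond : (∀ n, l < n → x.1 n = 1) ↔
        (∀ n : ↥(Γᶜ), (⟨l, hl⟩ : ↥(Γᶜ)) < n → (res H Γ x).1 n = 1) := by
      constructor
      · intro hc n hn
        exact hc n.1 (Subtype.mk_lt_mk.mp (show (⟨l, hl⟩ : ↥(Γᶜ)) < ⟨n.1, n.2⟩ from hn))
      · intro hc n hn
        have hnΓ : n ∈ Γᶜ := fun hmem => hl (hdc hmem hn.le)
        exact hc ⟨n, hnΓ⟩ (Subtype.mk_lt_mk.mpr hn)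
    simp only [xiFun, Function.update_self]
    by_cases hc : ∀ n, l < n → x.1 n = 1
    · rw [if_pos hc, if_pos (hcond.1 hc)]; rfl
    · rw [if_neg hc, if_neg (fun hy => hc (hcond.2 hy))]; rfl
  · have hne' : m.1 ≠ l := fun he => hne (Subtype.ext he)
    rw [xiFun_apply_ne H l h x.1 hne',
      xiFun_apply_ne (fun m : ↥(Γᶜ) => H m.1) ⟨l, hl⟩ h (res H Γ x).1 hne]
    rfl

/-- The subgroup of permutations of `S Λ H` that descend along `res` to an element of the
wreath product over `Γᶜ`. -/
def Tsub : Subgroup (Equiv.Perm (S Λ H)) where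
  carrier := {g | ∃ e : ↥(Wr ↥(Γᶜ) (fun m : ↥(Γᶜ) => H m.1)),
    ∀ x, res H Γ (g x) = (e : Equiv.Perm _) (res H Γ x)}
  one_mem' := ⟨1, fun _ => rfl⟩
  mul_mem' := by
    rintro a b ⟨ea, ha⟩ ⟨eb, hb⟩
    refine ⟨ea * eb, fun x => ?_⟩
    simp only [Equiv.Perm.mul_apply, Subgroup.coe_mul]
    rw [ha, hb]
  inv_mem' := by
    rintro a ⟨e, he⟩
    refine ⟨e⁻¹, fun x => ?_⟩
    have h1 := he (a⁻¹ x)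
    rw [← Equiv.Perm.mul_apply, mul_inv_cancel, Equiv.Perm.one_apply] at h1
    rw [h1]
    simp

lemma wr_le_Tsub (hdc : ∀ ⦃g l : Λ⦄, g ∈ Γ → l ≤ g → l ∈ Γ) :
    Wr Λ H ≤ Tsub H Γ := by
  rw [Wr, Subgroup.closure_le]
  rintro e ⟨l, h, rfl⟩
  by_cases hl : l ∈ Γ
  · exact ⟨1, fun x => by rw [res_xi_mem H Γ hl h x]; rfl⟩
  · exact ⟨⟨xi (fun m : ↥(Γᶜ) => H m.1) ⟨l, hl⟩ h,
      Subgroup.subset_closure ⟨⟨l, hl⟩, h, rfl⟩⟩,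
      fun x => res_xi_notmem H Γ hdc hl h x⟩

lemma wr_uniq (e₁ e₂ : ↥(Wr ↥(Γᶜ) (fun m : ↥(Γᶜ) => H m.1)))
    (h : ∀ x, (e₁ : Equiv.Perm _) (res H Γ x) = (e₂ : Equiv.Perm _) (res H Γ x)) :
    e₁ = e₂ := by
  refine Subtype.ext (Equiv.ext fun y => ?_)
  obtain ⟨x, rfl⟩ := res_surjective H Γ y
  exact h x

variable (hdc : ∀ ⦃g l : Λ⦄, g ∈ Γ → l ≤ g → l ∈ Γ)

/-- Value of the projection homomorphism. -/
def fFun (g : ↥(Wr Λ H)) : ↥(Wr ↥(Γᶜ) (fun m : ↥(Γᶜ) => H m.1)) :=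
  (wr_le_Tsub H Γ hdc g.2).choose

lemma fFun_spec (g : ↥(Wr Λ H)) (x : S Λ H) :
    res H Γ ((g : Equiv.Perm (S Λ H)) x) =
      ((fFun H Γ hdc g : ↥(Wr ↥(Γᶜ) (fun m : ↥(Γᶜ) => H m.1))) : Equiv.Perm _) (res H Γ x) :=
  (wr_le_Tsub H Γ hdc g.2).choose_spec x

/-- The projection homomorphism `H_Λ → Wr_{λ∈Λ∖Γ} H_λ`. -/
def fHom : ↥(Wr Λ H) →* ↥(Wr ↥(Γᶜ) (fun m : ↥(Γᶜ) => H m.1)) where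
  toFun := fFun H Γ hdc
  map_one' := wr_uniq H Γ _ _ fun x => by
    rw [← fFun_spec H Γ hdc 1 x]
    rfl
  map_mul' a b := wr_uniq H Γ _ _ fun x => by
    rw [← fFun_spec H Γ hdc (a * b) x]
    simp only [Subgroup.coe_mul, Equiv.Perm.mul_apply]
    rw [← fFun_spec H Γ hdc b x, ← fFun_spec H Γ hdc a ((b : Equiv.Perm (S Λ H)) x)]

lemma fHom_spec (g : ↥(Wr Λ H)) (x : S Λ H) :
    ((fHom H Γ hdc g : ↥(Wr ↥(Γᶜ) (fun m : ↥(Γᶜ) => H m.1))) : Equiv.Perm _) (res H Γ x) =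
      res H Γ ((g : Equiv.Perm (S Λ H)) x) :=
  (fFun_spec H Γ hdc g x).symm

lemma fHom_surjective : Function.Surjective (fHom H Γ hdc) := by
  have key : ∀ e ∈ Wr ↥(Γᶜ) (fun m : ↥(Γᶜ) => H m.1),
      ∃ g : ↥(Wr Λ H),
        ((fHom H Γ hdc g : ↥(Wr ↥(Γᶜ) (fun m : ↥(Γᶜ) => H m.1))) : Equiv.Perm _) = e := by
    intro e he
    refine Subgroup.closure_induction ?_ ?_ ?_ ?_ he
    · rintro _ ⟨l, h, rfl⟩
      refine ⟨⟨xi H l.1 h, Subgroup.subset_closure ⟨l.1, h, rfl⟩⟩, ?_⟩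
      have : fHom H Γ hdc ⟨xi H l.1 h, Subgroup.subset_closure ⟨l.1, h, rfl⟩⟩ =
          ⟨xi (fun m : ↥(Γᶜ) => H m.1) l h, Subgroup.subset_closure ⟨l, h, rfl⟩⟩ := by
        refine wr_uniq H Γ _ _ fun x => ?_
        rw [fHom_spec H Γ hdc ⟨xi H l.1 h, Subgroup.subset_closure ⟨l.1, h, rfl⟩⟩ x]
        have := res_xi_notmem H Γ hdc l.2 h x
        simpa using this
      rw [this]
    · exact ⟨1, by simp⟩
    · rintro a b _ _ ⟨ga, hga⟩ ⟨gb, hgb⟩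
      exact ⟨ga * gb, by rw [map_mul]; simp [hga, hgb]⟩
    · rintro a _ ⟨ga, hga⟩
      exact ⟨ga⁻¹, by rw [map_inv]; simp [← hga]⟩
  intro e
  obtain ⟨g, hg⟩ := key e.1 e.2
  exact ⟨g, Subtype.ext hg⟩

lemma fHom_ker : (fHom H Γ hdc).ker = D H Γ := by
  ext g
  simp only [MonoidHom.mem_ker]
  constructor
  · intro hg x l hl
    have h1 := fHom_spec H Γ hdc g x
    rw [hg] at h1
    have h2 : res H Γ ((g : Equiv.Perm (S Λ H)) x) = res H Γ x := by simpa using h1.symm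
    exact congrFun (congrArg Subtype.val h2) ⟨l, hl⟩
  · intro hg
    refine wr_uniq H Γ _ _ fun x => ?_
    rw [fHom_spec H Γ hdc g x]
    have : res H Γ ((g : Equiv.Perm (S Λ H)) x) = res H Γ x :=
      Subtype.ext (funext fun m => hg x m.1 m.2)
    simpa using this

end GW

end Aux


/-- if `Γ ⊆ Λ` is downward closed, then the quotient group `H_Λ / D_Γ` is
isomorphic to `Wr_{λ∈Λ\Γ} H_λ` (with the inherited order); equivalently, there is a
surjective homomorphism `H_Λ → Wr_{λ∈Λ\Γ} H_λ` whose kernel is exactly `D_Γ`. -/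
theorem wr_quotient_d_iso {Λ : Type*} [PartialOrder Λ] (H : Λ → Type*) [∀ l, Group (H l)]
    (Γ : Set Λ) (hdc : ∀ ⦃g l : Λ⦄, g ∈ Γ → l ≤ g → l ∈ Γ) :
    ∃ f : ↥(GW.Wr Λ H) →* ↥(GW.Wr ↥(Γᶜ) (fun l : ↥(Γᶜ) => H l.1)),
      Function.Surjective f ∧ f.ker = GW.D H Γ :=
  ⟨GW.fHom H Γ hdc, GW.fHom_surjective H Γ hdc, GW.fHom_ker H Γ hdc⟩
end
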